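/- Let K₀ ∈ (-1, 1) and for fixed L define S_ℓ = (S_{ℓ-1} + σ̂(S_{ℓ-1})/L²)/(1+1/L²) with S₀ = K₀, P_{ℓ+1} = Π_{i=ℓ}^{L-1} (1+σ̂'(S_i)/L²)/(1+1/L²) for ℓ < L and P_{L+1} = 1, and Ω̄_L = (1/(2L))·Σ_{ℓ=1}^{L} P_{ℓ+1}·(σ̂(S_{ℓ-1}) + S_{ℓ-1}·σ̂'(S_{ℓ-1})). Then there is a constant C (depending on K₀) such that |Ω̄_L − (1/2)(σ̂(K₀) + K₀·σ̂'(K₀))| ≤ C/L for all L ≥ 1. -/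

import Mathlib

open Real Finset

/-- Dual activation of the normalized ReLU. -/
noncomputable def hatSigma (ρ : ℝ) : ℝ :=
  (Real.sqrt (1 - ρ ^ 2) + (π - Real.arccos ρ) * ρ) / π

/-- Derivative of the dual activation. -/
noncomputable def hatSigma' (ρ : ℝ) : ℝ := (π - Real.arccos ρ) / π

/-- S_ℓ for the depth-L ResNet with α = 1/L: S₀ = K₀,
S_ℓ = (S_{ℓ-1} + σ̂(S_{ℓ-1})/L²)/(1 + 1/L²). -/
noncomputable def resS (K₀ : ℝ) (L : ℕ) : ℕ → ℝ
  | 0 => K₀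
  | n + 1 => (resS K₀ L n + hatSigma (resS K₀ L n) / (L : ℝ) ^ 2) / (1 + 1 / (L : ℝ) ^ 2)

/-- P_{ℓ+1,L} = ∏_{i=ℓ}^{L-1} (1 + σ̂'(S_i)/L²)/(1 + 1/L²); the empty product
(ℓ = L) gives P_{L+1,L} = 1. -/
noncomputable def resP (K₀ : ℝ) (L ℓ : ℕ) : ℝ :=
  ∏ i ∈ Finset.Ico ℓ L, (1 + hatSigma' (resS K₀ L i) / (L : ℝ) ^ 2) / (1 + 1 / (L : ℝ) ^ 2)

/-- Normalized NTK of the depth-L ResNet at inner product K₀: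
Ω̄_L = (1/(2L))·Σ_{ℓ=1}^{L} P_{ℓ+1,L}·(σ̂(S_{ℓ-1}) + S_{ℓ-1}σ̂'(S_{ℓ-1})). -/
noncomputable def resOmega (K₀ : ℝ) (L : ℕ) : ℝ :=
  (1 / (2 * (L : ℝ))) * ∑ ℓ ∈ Finset.Icc 1 L,
    resP K₀ L ℓ *
      (hatSigma (resS K₀ L (ℓ - 1)) + resS K₀ L (ℓ - 1) * hatSigma' (resS K₀ L (ℓ - 1)))

/-! ### Auxiliary lemmas -/

lemma hatSigma'_nonneg (ρ : ℝ) : 0 ≤ hatSigma' ρ := by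
  unfold hatSigma'
  have := Real.arccos_le_pi ρ
  exact div_nonneg (by linarith) Real.pi_pos.le

lemma hatSigma'_le_one (ρ : ℝ) : hatSigma' ρ ≤ 1 := by
  unfold hatSigma'
  rw [div_le_one Real.pi_pos]
  have := Real.arccos_nonneg ρ
  linarith

lemma le_hatSigma {ρ : ℝ} (h1 : -1 ≤ ρ) (h2 : ρ ≤ 1) : ρ ≤ hatSigma ρ := by
  unfold hatSigma
  rw [le_div_iff₀ Real.pi_pos]
  have harc0 : 0 ≤ Real.arccos ρ := Real.arccos_nonneg ρ
  have hsq : 0 ≤ Real.sqrt (1 - ρ ^ 2) := Real.sqrt_nonneg _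
  -- suffices ρ * arccos ρ ≤ √(1 - ρ²)
  have key : ρ * Real.arccos ρ ≤ Real.sqrt (1 - ρ ^ 2) := by
    rcases le_or_gt ρ 0 with h | h
    · nlinarith [mul_nonneg (neg_nonneg.2 h) harc0]
    · have hθ : Real.arccos ρ < π / 2 := Real.arccos_lt_pi_div_two.mpr h
      have hcos : Real.cos (Real.arccos ρ) = ρ := Real.cos_arccos h1 h2
      have hsin : Real.sin (Real.arccos ρ) = Real.sqrt (1 - ρ ^ 2) := Real.sin_arccos ρ
      rcases eq_or_lt_of_le harc0 with heq | hpos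
      · rw [← heq]; simpa using hsq
      · have htan := Real.lt_tan hpos hθ
        rw [Real.tan_eq_sin_div_cos, hcos, hsin] at htan
        have := (lt_div_iff₀ h).mp htan
        nlinarith
  nlinarith

lemma hatSigma_le_one {ρ : ℝ} (h1 : -1 ≤ ρ) (h2 : ρ ≤ 1) : hatSigma ρ ≤ 1 := by
  unfold hatSigma
  rw [div_le_one Real.pi_pos]
  have harc0 : 0 ≤ Real.arccos ρ := Real.arccos_nonneg ρ
  have harcπ : Real.arccos ρ ≤ π := Real.arccos_le_pi ρ
  have hsin : Real.sqrt (1 - ρ ^ 2) ≤ Real.arccos ρ := by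
    rw [← Real.sin_arccos]
    rcases eq_or_lt_of_le harc0 with heq | hpos
    · rw [← heq]; simp
    · exact le_of_lt (Real.sin_lt hpos)
  nlinarith

lemma neg_one_le_hatSigma {ρ : ℝ} (h1 : -1 ≤ ρ) (h2 : ρ ≤ 1) : -1 ≤ hatSigma ρ :=
  le_trans h1 (le_hatSigma h1 h2)

/-- Generic lower bound for products of factors in `[1-ε, 1]`. -/
lemma prod_one_sub_bound (s : Finset ℕ) (f : ℕ → ℝ) (ε : ℝ) (hε0 : 0 ≤ ε) (hε1 : ε ≤ 1)
    (h : ∀ i ∈ s, 1 - ε ≤ f i ∧ f i ≤ 1) :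
    1 - (s.card : ℝ) * ε ≤ ∏ i ∈ s, f i := by
  induction s using Finset.cons_induction with
  | empty => simp
  | cons a s ha ih =>
    have h' : ∀ i ∈ s, 1 - ε ≤ f i ∧ f i ≤ 1 := fun i hi => h i (Finset.mem_cons.mpr (Or.inr hi))
    have hprev := ih h'
    have hprod_nonneg : 0 ≤ ∏ i ∈ s, f i :=
      Finset.prod_nonneg fun i hi => le_trans (by linarith) (h' i hi).1
    have hprod_le_one : ∏ i ∈ s, f i ≤ 1 :=
      Finset.prod_le_one (fun i hi => le_trans (by linarith) (h' i hi).1) (fun i hi => (h' i hi).2)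
    have hfa := h a (Finset.mem_cons_self a s)
    rw [Finset.prod_cons, Finset.card_cons]
    push_cast
    have e1 : (1 - ε) * ∏ i ∈ s, f i ≤ f a * ∏ i ∈ s, f i :=
      mul_le_mul_of_nonneg_right hfa.1 hprod_nonneg
    have e2 : ε * ∏ i ∈ s, f i ≤ ε * 1 := mul_le_mul_of_nonneg_left hprod_le_one hε0
    nlinarith

/-- Upper bound 1 on such products. -/
lemma prod_le_one_aux (s : Finset ℕ) (f : ℕ → ℝ) (h : ∀ i ∈ s, 0 ≤ f i ∧ f i ≤ 1) :
    ∏ i ∈ s, f i ≤ 1 :=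
  Finset.prod_le_one (fun i hi => (h i hi).1) (fun i hi => (h i hi).2)

/-- Derivative of F(ρ) = σ̂(ρ) + ρ σ̂'(ρ) at interior points. -/
lemma hasDerivAt_F {z : ℝ} (h1 : -1 < z) (h2 : z < 1) :
    HasDerivAt (fun ρ => hatSigma ρ + ρ * hatSigma' ρ)
      (hatSigma' z + (π - Real.arccos z + z / Real.sqrt (1 - z ^ 2)) / π) z := by
  have hz2 : (0 : ℝ) < 1 - z ^ 2 := by nlinarith
  have hsqpos : 0 < Real.sqrt (1 - z ^ 2) := Real.sqrt_pos.mpr hz2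
  have hsq : Real.sqrt (1 - z ^ 2) ≠ 0 := hsqpos.ne'
  have hsqsq : Real.sqrt (1 - z ^ 2) ^ 2 = 1 - z ^ 2 := Real.sq_sqrt hz2.le
  have hπ : π ≠ 0 := Real.pi_ne_zero
  have hpoly : HasDerivAt (fun ρ : ℝ => 1 - ρ ^ 2) (-(2 * z)) z := by
    simpa using ((hasDerivAt_pow 2 z).const_sub 1)
  have hsqrt : HasDerivAt (fun ρ : ℝ => Real.sqrt (1 - ρ ^ 2))
      (-(2 * z) / (2 * Real.sqrt (1 - z ^ 2))) z := hpoly.sqrt hz2.ne'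
  have harc : HasDerivAt (fun ρ : ℝ => π - Real.arccos ρ) (1 / Real.sqrt (1 - z ^ 2)) z := by
    have := (Real.hasDerivAt_arccos (ne_of_gt h1) (ne_of_lt h2)).const_sub π
    simpa using this
  have hmul : HasDerivAt (fun ρ : ℝ => (π - Real.arccos ρ) * ρ)
      (1 / Real.sqrt (1 - z ^ 2) * z + (π - Real.arccos z) * 1) z :=
    harc.mul (hasDerivAt_id z)
  have hσ : HasDerivAt hatSigma
      ((-(2 * z) / (2 * Real.sqrt (1 - z ^ 2)) +
        (1 / Real.sqrt (1 - z ^ 2) * z + (π - Real.arccos z) * 1)) / π) z := by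
    unfold hatSigma
    exact (hsqrt.add hmul).div_const π
  have hσ' : HasDerivAt (fun ρ : ℝ => ρ * hatSigma' ρ)
      (1 * ((π - Real.arccos z) / π) + z * (1 / Real.sqrt (1 - z ^ 2) / π)) z := by
    have harc' : HasDerivAt (fun ρ : ℝ => (π - Real.arccos ρ) / π)
        (1 / Real.sqrt (1 - z ^ 2) / π) z := harc.div_const π
    have := (hasDerivAt_id' z).fun_mul harc'
    simpa [hatSigma'] using this
  have := hσ.add hσ'
  refine this.congr_deriv ?_
  unfold hatSigma'
  field_simp
  ring

/-- Lipschitz estimate for F on [-c, c] ⊂ (-1, 1). -/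
lemma F_lipschitz {c : ℝ} (hc0 : 0 ≤ c) (hc1 : c < 1) {x y : ℝ}
    (hx : x ∈ Set.Icc (-c) c) (hy : y ∈ Set.Icc (-c) c) :
    |(hatSigma y + y * hatSigma' y) - (hatSigma x + x * hatSigma' x)| ≤
      (2 + 1 / Real.sqrt (1 - c ^ 2)) * |y - x| := by
  have hc2 : (0 : ℝ) < 1 - c ^ 2 := by nlinarith
  have hMpos : 0 < Real.sqrt (1 - c ^ 2) := Real.sqrt_pos.mpr hc2
  set M : ℝ := 1 / Real.sqrt (1 - c ^ 2) with hM
  have hM1 : 1 ≤ M := by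
    rw [hM, le_div_iff₀ hMpos, one_mul]
    calc Real.sqrt (1 - c ^ 2) ≤ Real.sqrt 1 := Real.sqrt_le_sqrt (by nlinarith)
    _ = 1 := Real.sqrt_one
  -- bound on the derivative on [-c, c]
  have hbound : ∀ z ∈ Set.Icc (-c) c,
      |hatSigma' z + (π - Real.arccos z + z / Real.sqrt (1 - z ^ 2)) / π| ≤ 2 + M := by
    intro z hz
    obtain ⟨hz1, hz2⟩ := hz
    have hz2' : z ^ 2 ≤ c ^ 2 := sq_le_sq' hz1 hz2
    have hzpos : (0 : ℝ) < 1 - z ^ 2 := by nlinarith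
    have hsz : Real.sqrt (1 - c ^ 2) ≤ Real.sqrt (1 - z ^ 2) := Real.sqrt_le_sqrt (by linarith)
    have hszpos : 0 < Real.sqrt (1 - z ^ 2) := lt_of_lt_of_le hMpos hsz
    have hzdiv : |z / Real.sqrt (1 - z ^ 2)| ≤ M := by
      rw [abs_div, abs_of_pos hszpos, div_le_iff₀ hszpos, hM, div_mul_eq_mul_div,
        one_mul, le_div_iff₀ hMpos]
      have h1 : |z| ≤ 1 := by
        rw [abs_le]; constructor <;> nlinarith
      nlinarith [abs_nonneg z]
    have harc0 : 0 ≤ Real.arccos z := Real.arccos_nonneg z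
    have harcπ : Real.arccos z ≤ π := Real.arccos_le_pi z
    have h1 : |hatSigma' z| ≤ 1 := by
      rw [abs_le]; exact ⟨by linarith [hatSigma'_nonneg z], hatSigma'_le_one z⟩
    have h2 : |(π - Real.arccos z + z / Real.sqrt (1 - z ^ 2)) / π| ≤ 1 + M := by
      rw [abs_div, abs_of_pos Real.pi_pos, div_le_iff₀ Real.pi_pos]
      have := abs_add_le (π - Real.arccos z) (z / Real.sqrt (1 - z ^ 2))
      have hπa : |π - Real.arccos z| ≤ π := by rw [abs_le]; constructor <;> linarith
      have hπ1 : (1 : ℝ) ≤ π := by linarith [Real.pi_gt_three]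
      nlinarith
    calc |hatSigma' z + (π - Real.arccos z + z / Real.sqrt (1 - z ^ 2)) / π|
        ≤ |hatSigma' z| + |(π - Real.arccos z + z / Real.sqrt (1 - z ^ 2)) / π| := abs_add_le _ _
      _ ≤ 2 + M := by linarith
  -- mean value inequality
  have main : ∀ a b : ℝ, a ∈ Set.Icc (-c) c → b ∈ Set.Icc (-c) c → a ≤ b →
      |(hatSigma b + b * hatSigma' b) - (hatSigma a + a * hatSigma' a)| ≤ (2 + M) * (b - a) := by
    intro a b ha hb hab
    have hsub : Set.Icc a b ⊆ Set.Icc (-c) c := Set.Icc_subset_Icc ha.1 hb.2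
    have hder : ∀ z ∈ Set.Icc a b,
        HasDerivWithinAt (fun ρ => hatSigma ρ + ρ * hatSigma' ρ)
          (hatSigma' z + (π - Real.arccos z + z / Real.sqrt (1 - z ^ 2)) / π) (Set.Icc a b) z := by
      intro z hz
      obtain ⟨hz1, hz2⟩ := hsub hz
      exact (hasDerivAt_F (by linarith) (by linarith)).hasDerivWithinAt
    have hbd : ∀ z ∈ Set.Ico a b,
        ‖hatSigma' z + (π - Real.arccos z + z / Real.sqrt (1 - z ^ 2)) / π‖ ≤ 2 + M := by
      intro z hz
      rw [Real.norm_eq_abs]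
      exact hbound z (hsub ⟨hz.1, hz.2.le⟩)
    have := norm_image_sub_le_of_norm_deriv_le_segment' hder hbd b (Set.right_mem_Icc.mpr hab)
    rwa [Real.norm_eq_abs] at this
  rcases le_total x y with h | h
  · have := main x y hx hy h
    calc |(hatSigma y + y * hatSigma' y) - (hatSigma x + x * hatSigma' x)|
        ≤ (2 + M) * (y - x) := this
      _ = (2 + M) * |y - x| := by rw [abs_of_nonneg (by linarith)]
  · have := main y x hy hx h
    rw [abs_sub_comm]
    calc |(hatSigma x + x * hatSigma' x) - (hatSigma y + y * hatSigma' y)|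
        ≤ (2 + M) * (x - y) := this
      _ = (2 + M) * |y - x| := by rw [abs_sub_comm, abs_of_nonneg (by linarith)]

section SBounds

variable {K₀ : ℝ} {L : ℕ}

lemma resS_mem (h1 : -1 ≤ K₀) (h2 : K₀ ≤ 1) (hL : 1 ≤ L) :
    ∀ n, -1 ≤ resS K₀ L n ∧ resS K₀ L n ≤ 1 := by
  have hL2 : (1 : ℝ) ≤ (L : ℝ) ^ 2 := by
    have : (1 : ℝ) ≤ (L : ℝ) := by exact_mod_cast hL
    nlinarith
  have hd : (0 : ℝ) < 1 / (L : ℝ) ^ 2 := by positivity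
  intro n
  induction n with
  | zero => exact ⟨h1, h2⟩
  | succ n ih =>
    obtain ⟨ih1, ih2⟩ := ih
    have hσ1 := neg_one_le_hatSigma ih1 ih2
    have hσ2 := hatSigma_le_one ih1 ih2
    rw [resS]
    have hL2pos : (0 : ℝ) < (L : ℝ) ^ 2 := by linarith
    have e1 : -1 / (L : ℝ) ^ 2 ≤ hatSigma (resS K₀ L n) / (L : ℝ) ^ 2 := by gcongr
    have e2 : hatSigma (resS K₀ L n) / (L : ℝ) ^ 2 ≤ 1 / (L : ℝ) ^ 2 := by gcongr
    have e3 : -1 / (L : ℝ) ^ 2 = -(1 / (L : ℝ) ^ 2) := by ring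
    constructor
    · rw [le_div_iff₀ (by positivity)]
      rw [e3] at e1
      linarith
    · rw [div_le_one (by positivity)]
      linarith

lemma resS_dist (h1 : -1 ≤ K₀) (h2 : K₀ ≤ 1) (hL : 1 ≤ L) :
    ∀ n, |resS K₀ L n - K₀| ≤ 2 * n / (L : ℝ) ^ 2 := by
  have hL2 : (1 : ℝ) ≤ (L : ℝ) ^ 2 := by
    have : (1 : ℝ) ≤ (L : ℝ) := by exact_mod_cast hL
    nlinarith
  intro n
  induction n with
  | zero => simp [resS]
  | succ n ih =>
    have hmem := resS_mem h1 h2 hL n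
    have hσ1 := neg_one_le_hatSigma hmem.1 hmem.2
    have hσ2 := hatSigma_le_one hmem.1 hmem.2
    have hstep : resS K₀ L (n + 1) - resS K₀ L n =
        (hatSigma (resS K₀ L n) - resS K₀ L n) / ((L : ℝ) ^ 2 + 1) := by
      rw [resS]
      field_simp
      ring
    have hnum : |hatSigma (resS K₀ L n) - resS K₀ L n| ≤ 2 := by
      rw [abs_le]; constructor <;> nlinarith [hmem.1, hmem.2]
    have hstep_bd : |resS K₀ L (n + 1) - resS K₀ L n| ≤ 2 / (L : ℝ) ^ 2 := by
      rw [hstep, abs_div, abs_of_pos (show (0:ℝ) < (L : ℝ) ^ 2 + 1 by linarith),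
        div_le_div_iff₀ (by linarith) (by linarith)]
      nlinarith [abs_nonneg (hatSigma (resS K₀ L n) - resS K₀ L n)]
    calc |resS K₀ L (n + 1) - K₀|
        ≤ |resS K₀ L (n + 1) - resS K₀ L n| + |resS K₀ L n - K₀| := abs_sub_le _ _ _
      _ ≤ 2 / (L : ℝ) ^ 2 + 2 * n / (L : ℝ) ^ 2 := by linarith
      _ = 2 * (n + 1) / (L : ℝ) ^ 2 := by ring
      _ = 2 * ((n : ℕ) + 1 : ℕ) / (L : ℝ) ^ 2 := by push_cast; ring

lemma resP_bounds (h1 : -1 ≤ K₀) (h2 : K₀ ≤ 1) (hL : 1 ≤ L) (ℓ : ℕ) :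
    1 - 1 / (L : ℝ) ≤ resP K₀ L ℓ ∧ resP K₀ L ℓ ≤ 1 := by
  have hLpos : (0 : ℝ) < (L : ℝ) := by exact_mod_cast hL
  have hL1 : (1 : ℝ) ≤ (L : ℝ) := by exact_mod_cast hL
  have hL2 : (1 : ℝ) ≤ (L : ℝ) ^ 2 := by nlinarith
  have hfac : ∀ i, 1 - 1 / (L : ℝ) ^ 2 ≤ (1 + hatSigma' (resS K₀ L i) / (L : ℝ) ^ 2) / (1 + 1 / (L : ℝ) ^ 2) ∧
      (1 + hatSigma' (resS K₀ L i) / (L : ℝ) ^ 2) / (1 + 1 / (L : ℝ) ^ 2) ≤ 1 := by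
    intro i
    have hσ0 := hatSigma'_nonneg (resS K₀ L i)
    have hσ1 := hatSigma'_le_one (resS K₀ L i)
    have hden : (0 : ℝ) < 1 + 1 / (L : ℝ) ^ 2 := by positivity
    have hL2pos : (0 : ℝ) < (L : ℝ) ^ 2 := by positivity
    constructor
    · rw [le_div_iff₀ hden]
      have e1 : hatSigma' (resS K₀ L i) / (L : ℝ) ^ 2 ≥ 0 := by positivity
      have e2 : (1 - 1 / (L:ℝ)^2) * (1 + 1 / (L:ℝ)^2) = 1 - (1/(L:ℝ)^2)^2 := by ring
      have e3 : (0:ℝ) < 1/(L:ℝ)^2 := by positivity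
      nlinarith
    · rw [div_le_one hden]
      have : hatSigma' (resS K₀ L i) / (L : ℝ) ^ 2 ≤ 1 / (L : ℝ) ^ 2 := by gcongr
      linarith
  have hε0 : (0 : ℝ) ≤ 1 / (L : ℝ) ^ 2 := by positivity
  have hε1 : 1 / (L : ℝ) ^ 2 ≤ 1 := by rw [div_le_one (by positivity)]; linarith
  constructor
  · have := prod_one_sub_bound (Finset.Ico ℓ L) _ (1 / (L : ℝ) ^ 2) hε0 hε1
      (fun i _ => hfac i)
    rw [Nat.card_Ico] at this
    refine le_trans ?_ this
    have hcard : ((L - ℓ : ℕ) : ℝ) ≤ (L : ℝ) := by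
      exact_mod_cast Nat.cast_le.mpr (Nat.sub_le L ℓ)
    have : ((L - ℓ : ℕ) : ℝ) * (1 / (L : ℝ) ^ 2) ≤ (L : ℝ) * (1 / (L : ℝ) ^ 2) := by
      apply mul_le_mul_of_nonneg_right hcard hε0
    have heq : (L : ℝ) * (1 / (L : ℝ) ^ 2) = 1 / (L : ℝ) := by
      field_simp
    linarith [heq ▸ this]
  · exact prod_le_one_aux _ _ fun i _ => ⟨le_trans (by linarith [hε1]) (hfac i).1, (hfac i).2⟩

end SBounds

set_option maxHeartbeats 1000000 in
/-- O(1/L) convergence of the normalized ResNet NTK to the depth-1 NTK. -/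
theorem resnet_ntk_convergence (K₀ : ℝ) (hK₀ : K₀ ∈ Set.Ioo (-1 : ℝ) 1) :
    ∃ C : ℝ, ∀ L : ℕ, 1 ≤ L →
      |resOmega K₀ L - (1 / 2) * (hatSigma K₀ + K₀ * hatSigma' K₀)| ≤ C / L := by
  obtain ⟨hK1, hK2⟩ := hK₀
  have habsK : |K₀| < 1 := abs_lt.mpr ⟨hK1, hK2⟩
  set c : ℝ := (1 + |K₀|) / 2 with hc
  have hc1 : c < 1 := by rw [hc]; linarith
  have hc0 : 0 ≤ c := by rw [hc]; positivity
  have hcK : |K₀| ≤ c := by rw [hc]; linarith [abs_nonneg K₀]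
  set M : ℝ := 1 / Real.sqrt (1 - c ^ 2) with hM
  have hc2 : (0 : ℝ) < 1 - c ^ 2 := by nlinarith
  have hMpos : 0 < M := div_pos one_pos (Real.sqrt_pos.mpr hc2)
  set R : ℝ := 4 / (1 - |K₀|) with hR
  have hRpos : 0 < R := div_pos (by norm_num) (by linarith)
  refine ⟨max (3 + M) (2 * R), ?_⟩
  intro L hL
  have hLpos : (0 : ℝ) < (L : ℝ) := by exact_mod_cast hL
  have hL1 : (1 : ℝ) ≤ (L : ℝ) := by exact_mod_cast hL
  have hL2 : (1 : ℝ) ≤ (L : ℝ) ^ 2 := by nlinarith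
  set f : ℝ → ℝ := fun ρ => hatSigma ρ + ρ * hatSigma' ρ with hf
  -- basic term bounds
  have hterm_bd : ∀ ρ : ℝ, -1 ≤ ρ → ρ ≤ 1 → |f ρ| ≤ 2 := by
    intro ρ ha hb
    have e1 := neg_one_le_hatSigma ha hb
    have e2 := hatSigma_le_one ha hb
    have e3 := hatSigma'_nonneg ρ
    have e4 := hatSigma'_le_one ρ
    have h : |hatSigma ρ + ρ * hatSigma' ρ| ≤ 2 := by
      rw [abs_le]; constructor <;> nlinarith
    simpa [hf] using h
  have hSmem := resS_mem hK1.le hK2.le hL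
  have hSdist := resS_dist hK1.le hK2.le hL
  have hPb := resP_bounds hK1.le hK2.le hL
  -- S close to K₀ : for any n ≤ L, |S n - K₀| ≤ 2 / L
  have hSclose : ∀ n, n ≤ L → |resS K₀ L n - K₀| ≤ 2 / (L : ℝ) := by
    intro n hn
    refine le_trans (hSdist n) ?_
    rw [div_le_div_iff₀ (by positivity) hLpos]
    have : (n : ℝ) ≤ (L : ℝ) := by exact_mod_cast hn
    nlinarith
  -- rewrite the difference as an averaged sum
  have hcard : (Finset.Icc 1 L).card = L := by rw [Nat.card_Icc]; omega
  have hsplit : resOmega K₀ L - (1 / 2) * f K₀ =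
      (1 / (2 * (L : ℝ))) * ∑ ℓ ∈ Finset.Icc 1 L,
        (resP K₀ L ℓ * f (resS K₀ L (ℓ - 1)) - f K₀) := by
    rw [Finset.sum_sub_distrib, Finset.sum_const, hcard, resOmega]
    rw [nsmul_eq_mul, mul_sub]
    congr 1
    field_simp
  -- pointwise bound on each term of the sum
  rcases le_or_gt R (L : ℝ) with hbig | hsmall
  · -- large L case
    have hLR : 4 ≤ (L : ℝ) * (1 - |K₀|) := by
      rw [hR] at hbig
      rw [div_le_iff₀ (by linarith)] at hbig
      linarith [mul_comm (L : ℝ) (1 - |K₀|) ▸ hbig]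
    have hclosec : 2 / (L : ℝ) ≤ (1 - |K₀|) / 2 := by
      rw [div_le_div_iff₀ hLpos (by norm_num)]
      nlinarith
    have hK₀mem : K₀ ∈ Set.Icc (-c) c := by
      constructor <;> [linarith [neg_abs_le K₀]; linarith [le_abs_self K₀]]
    have hterm : ∀ ℓ ∈ Finset.Icc 1 L,
        |resP K₀ L ℓ * f (resS K₀ L (ℓ - 1)) - f K₀| ≤ (6 + 2 * M) / (L : ℝ) := by
      intro ℓ hℓ
      rw [Finset.mem_Icc] at hℓ
      have hℓL : ℓ - 1 ≤ L := le_trans (Nat.sub_le ℓ 1) hℓ.2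
      set S := resS K₀ L (ℓ - 1) with hS
      have hSm := hSmem (ℓ - 1)
      have hSc := hSclose (ℓ - 1) hℓL
      have hSmemc : S ∈ Set.Icc (-c) c := by
        have h1 : |S| ≤ |K₀| + 2 / (L : ℝ) := by
          calc |S| = |K₀ + (S - K₀)| := by ring_nf
            _ ≤ |K₀| + |S - K₀| := abs_add_le _ _
            _ ≤ |K₀| + 2 / (L : ℝ) := by linarith
        have h2 : |S| ≤ c := by rw [hc]; linarith
        exact abs_le.mp h2
      have hfS : |f S| ≤ 2 := hterm_bd S hSm.1 hSm.2
      have hPd : |resP K₀ L ℓ - 1| ≤ 1 / (L : ℝ) := by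
        have := hPb ℓ
        rw [abs_le]; constructor <;> [linarith [this.1]; linarith [this.2, (by positivity : (0:ℝ) ≤ 1 / (L:ℝ))]]
      have hlip : |f S - f K₀| ≤ (2 + M) * |S - K₀| := F_lipschitz hc0 hc1 hK₀mem hSmemc
      have habs : |S - K₀| ≤ 2 / (L : ℝ) := hSc
      calc |resP K₀ L ℓ * f S - f K₀|
          = |(resP K₀ L ℓ - 1) * f S + (f S - f K₀)| := by ring_nf
        _ ≤ |(resP K₀ L ℓ - 1) * f S| + |f S - f K₀| := abs_add_le _ _
        _ = |resP K₀ L ℓ - 1| * |f S| + |f S - f K₀| := by rw [abs_mul]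
        _ ≤ (1 / (L : ℝ)) * 2 + (2 + M) * (2 / (L : ℝ)) := by
            have e1 : |resP K₀ L ℓ - 1| * |f S| ≤ (1 / (L : ℝ)) * 2 :=
              mul_le_mul hPd hfS (abs_nonneg _) (by positivity)
            have e2 : (2 + M) * |S - K₀| ≤ (2 + M) * (2 / (L : ℝ)) :=
              mul_le_mul_of_nonneg_left habs (by linarith)
            linarith
        _ = (6 + 2 * M) / (L : ℝ) := by field_simp; ring
    -- combine
    rw [hsplit]
    have hsum : |∑ ℓ ∈ Finset.Icc 1 L, (resP K₀ L ℓ * f (resS K₀ L (ℓ - 1)) - f K₀)| ≤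
        (L : ℝ) * ((6 + 2 * M) / (L : ℝ)) := by
      calc |∑ ℓ ∈ Finset.Icc 1 L, (resP K₀ L ℓ * f (resS K₀ L (ℓ - 1)) - f K₀)|
          ≤ ∑ ℓ ∈ Finset.Icc 1 L, |resP K₀ L ℓ * f (resS K₀ L (ℓ - 1)) - f K₀| :=
            Finset.abs_sum_le_sum_abs _ _
        _ ≤ ∑ _ℓ ∈ Finset.Icc 1 L, (6 + 2 * M) / (L : ℝ) := Finset.sum_le_sum hterm
        _ = (L : ℝ) * ((6 + 2 * M) / (L : ℝ)) := by
            rw [Finset.sum_const, hcard, nsmul_eq_mul]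
    rw [abs_mul, abs_of_pos (by positivity : (0:ℝ) < 1 / (2 * (L : ℝ)))]
    calc (1 / (2 * (L : ℝ))) * |∑ ℓ ∈ Finset.Icc 1 L, (resP K₀ L ℓ * f (resS K₀ L (ℓ - 1)) - f K₀)|
        ≤ (1 / (2 * (L : ℝ))) * ((L : ℝ) * ((6 + 2 * M) / (L : ℝ))) := by
          apply mul_le_mul_of_nonneg_left hsum (by positivity)
      _ = (3 + M) / (L : ℝ) := by field_simp; ring
      _ ≤ max (3 + M) (2 * R) / (L : ℝ) := by gcongr; exact le_max_left _ _
  · -- small L case: crude bound 2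
    have hcrude : |resOmega K₀ L - (1 / 2) * f K₀| ≤ 2 := by
      have hΩ : |resOmega K₀ L| ≤ 1 := by
        rw [resOmega, abs_mul, abs_of_pos (by positivity : (0:ℝ) < 1 / (2 * (L : ℝ)))]
        have hsum : |∑ ℓ ∈ Finset.Icc 1 L, resP K₀ L ℓ *
            (hatSigma (resS K₀ L (ℓ - 1)) + resS K₀ L (ℓ - 1) * hatSigma' (resS K₀ L (ℓ - 1)))| ≤
            (L : ℝ) * 2 := by
          calc _ ≤ ∑ ℓ ∈ Finset.Icc 1 L, |resP K₀ L ℓ *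
              (hatSigma (resS K₀ L (ℓ - 1)) + resS K₀ L (ℓ - 1) * hatSigma' (resS K₀ L (ℓ - 1)))| :=
                Finset.abs_sum_le_sum_abs _ _
            _ ≤ ∑ _ℓ ∈ Finset.Icc 1 L, (2 : ℝ) := by
                apply Finset.sum_le_sum
                intro ℓ _
                rw [abs_mul]
                have hP := hPb ℓ
                have hPabs : |resP K₀ L ℓ| ≤ 1 := by
                  rw [abs_le]
                  have h1L : 1 / (L:ℝ) ≤ 1 := by rw [div_le_one hLpos]; exact hL1
                  constructor <;> [linarith [hP.1]; exact hP.2]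
                have hSm := hSmem (ℓ - 1)
                have := hterm_bd (resS K₀ L (ℓ - 1)) hSm.1 hSm.2
                rw [hf] at this
                calc |resP K₀ L ℓ| * _ ≤ 1 * 2 :=
                      mul_le_mul hPabs this (abs_nonneg _) zero_le_one
                  _ = 2 := one_mul 2
            _ = (L : ℝ) * 2 := by rw [Finset.sum_const, hcard, nsmul_eq_mul]
        calc (1 / (2 * (L : ℝ))) * _ ≤ (1 / (2 * (L : ℝ))) * ((L : ℝ) * 2) :=
              mul_le_mul_of_nonneg_left hsum (by positivity)
          _ = 1 := by field_simp
      have hT : |(1 / 2) * f K₀| ≤ 1 := by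
        rw [abs_mul]
        have := hterm_bd K₀ hK1.le hK2.le
        rw [abs_of_pos (by norm_num : (0:ℝ) < (1:ℝ)/2)]
        linarith
      calc |resOmega K₀ L - (1 / 2) * f K₀| ≤ |resOmega K₀ L| + |(1 / 2) * f K₀| := abs_sub _ _
        _ ≤ 2 := by linarith
    have h2R : 2 ≤ 2 * R / (L : ℝ) := by
      rw [le_div_iff₀ hLpos]
      nlinarith
    calc |resOmega K₀ L - (1 / 2) * f K₀| ≤ 2 := hcrude
      _ ≤ 2 * R / (L : ℝ) := h2R
      _ ≤ max (3 + M) (2 * R) / (L : ℝ) := by gcongr; exact le_max_right _ _
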